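/- arXiv:2501.18563 — 3 statements merged into one kernel-verified Lean document; each statement's English description precedes it below -/
import Mathlib

section
/- Consider the cubic u(t) = β₃t³ + β₂t² + β₁t + β₀ on [0, t₁] with t₁ > 0, satisfying u(0) = u₀, u(t₁) = u₁ with κ := (u₁ − u₀)/t₁ > 0, u'(0) = u₀', and inflection at t₁ (u''(t₁) = 0). If 0 ≤ u₀' < κ, then u''(t) > 0 for all t ∈ (0, t₁) and u'(t₁) > 0. -/
lemma cubic_deriv (a b c d : ℝ) :
    deriv (fun t : ℝ => a * t ^ 3 + b * t ^ 2 + c * t + d)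
      = fun t => 3 * a * t ^ 2 + 2 * b * t + c := by
  funext t
  have h : HasDerivAt (fun t : ℝ => a * t ^ 3 + b * t ^ 2 + c * t + d)
      (3 * a * t ^ 2 + 2 * b * t + c) t := by
    have h3 := (hasDerivAt_pow 3 t).const_mul a
    have h2 := (hasDerivAt_pow 2 t).const_mul b
    have h1 := (hasDerivAt_id t).const_mul c
    have h0 := hasDerivAt_const t d
    refine (((h3.add h2).add h1).add h0).congr_deriv ?_
    ring
  exact h.deriv

lemma quad_deriv (a b c : ℝ) :
    deriv (fun t : ℝ => a * t ^ 2 + b * t + c) = fun t => 2 * a * t + b := by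
  funext t
  have h : HasDerivAt (fun t : ℝ => a * t ^ 2 + b * t + c) (2 * a * t + b) t := by
    have h2 := (hasDerivAt_pow 2 t).const_mul a
    have h1 := (hasDerivAt_id t).const_mul b
    have h0 := hasDerivAt_const t c
    refine ((h2.add h1).add h0).congr_deriv ?_
    ring
  exact h.deriv

/-- Case 2.1 of the `C⁰` trajectory predictor proof (motif `s₊₊ᵦ` ending in an
inflection point): a cubic on `[0,t₁]` with `u(0) = u₀`, `u(t₁) = u₁`,
`κ = (u₁ − u₀)/t₁ > 0`, `u'(0) = u₀'`, `u''(t₁) = 0`, and `0 ≤ u₀' < κ`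
is strictly convex on `(0,t₁)` and has positive derivative at `t₁`. -/
theorem stmt_9 (β₀ β₁ β₂ β₃ t₁ u₀ u₁ u₀' κ : ℝ)
    (ht₁ : 0 < t₁)
    (u : ℝ → ℝ) (hu : u = fun t => β₃ * t ^ 3 + β₂ * t ^ 2 + β₁ * t + β₀)
    (h0 : u 0 = u₀) (h1 : u t₁ = u₁)
    (hκ : κ = (u₁ - u₀) / t₁) (hκpos : 0 < κ)
    (hd0 : deriv u 0 = u₀')
    (hinfl : deriv (deriv u) t₁ = 0)
    (hlo : 0 ≤ u₀') (hhi : u₀' < κ) :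
    (∀ t ∈ Set.Ioo 0 t₁, 0 < deriv (deriv u) t) ∧ 0 < deriv u t₁ := by
  have hd1 : deriv u = fun t => 3 * β₃ * t ^ 2 + 2 * β₂ * t + β₁ := by
    rw [hu]; exact cubic_deriv β₃ β₂ β₁ β₀
  have hd2 : deriv (deriv u) = fun t => 2 * (3 * β₃) * t + 2 * β₂ := by
    rw [hd1]; exact quad_deriv (3 * β₃) (2 * β₂) β₁
  -- extract equations
  have e0 : β₀ = u₀ := by simpa [hu] using h0
  have e1 : β₁ = u₀' := by simpa [hd1] using hd0
  have e2 : 6 * β₃ * t₁ + 2 * β₂ = 0 := by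
    have := hinfl; rw [hd2] at this; simp only at this; linarith
  have eκ : κ * t₁ = u₁ - u₀ := by
    rw [hκ]; field_simp
  have eu1 : β₃ * t₁ ^ 3 + β₂ * t₁ ^ 2 + β₁ * t₁ + β₀ = u₁ := by
    simpa [hu] using h1
  -- solve: β₂ = -3 β₃ t₁, and -2 β₃ t₁³ = (κ - u₀') t₁
  have hb2 : β₂ = -3 * β₃ * t₁ := by linarith
  have hb3 : β₃ * t₁ ^ 2 = (u₀' - κ) / 2 := by
    have h' : β₃ * t₁ ^ 3 + (-3 * β₃ * t₁) * t₁ ^ 2 + u₀' * t₁ + u₀ = u₁ := by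
      rw [← hb2, ← e1, ← e0]; exact eu1
    have : -2 * (β₃ * t₁ ^ 2) * t₁ = (κ - u₀') * t₁ := by
      nlinarith [eκ]
    have ht₁' : t₁ ≠ 0 := ne_of_gt ht₁
    field_simp
    nlinarith [this]
  have hb3neg : β₃ < 0 := by
    have h2 : (0:ℝ) < t₁ ^ 2 := by positivity
    nlinarith
  constructor
  · intro t ht
    rw [hd2]
    show 0 < 2 * (3 * β₃) * t + 2 * β₂
    have h6 : 2 * (3 * β₃) * t + 2 * β₂ = 6 * β₃ * (t - t₁) := by rw [hb2]; ring
    rw [h6]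
    have : t - t₁ < 0 := by linarith [ht.2]
    nlinarith
  · rw [hd1]
    show 0 < 3 * β₃ * t₁ ^ 2 + 2 * β₂ * t₁ + β₁
    have : 3 * β₃ * t₁ ^ 2 + 2 * β₂ * t₁ + β₁ = -3 * (β₃ * t₁ ^ 2) + u₀' := by
      rw [hb2, e1]; ring
    rw [this, hb3]
    linarith
end

section
/- Consider the cubic u(t) = β₃t³ + β₂t² + β₁t + β₀ on [0, t₁] with t₁ > 0, satisfying u(0) = u₀, u(t₁) = u₁ with κ := (u₁ − u₀)/t₁ > 0, u'(0) = u₀', and u'(t₁) = 0 (local maximum at t₁). If 1.5κ < u₀' < 3κ, then u'(t) > 0 for all t ∈ (0, t₁) and u''(t) < 0 for all t ∈ (0, t₁). -/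
/-- Case 2.2 of the `C⁰` trajectory predictor proof (motif `s₊₋ᵦ` ending in a local
maximum): a cubic on `[0,t₁]` with `u(0) = u₀`, `u(t₁) = u₁`, `κ = (u₁ − u₀)/t₁ > 0`,
`u'(0) = u₀'`, `u'(t₁) = 0`, and `1.5κ < u₀' < 3κ` is strictly increasing and strictly
concave on `(0,t₁)`. -/
theorem stmt_10 (β₀ β₁ β₂ β₃ t₁ u₀ u₁ u₀' κ : ℝ)
    (ht₁ : 0 < t₁)
    (u : ℝ → ℝ) (hu : u = fun t => β₃ * t ^ 3 + β₂ * t ^ 2 + β₁ * t + β₀)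
    (h0 : u 0 = u₀) (h1 : u t₁ = u₁)
    (hκ : κ = (u₁ - u₀) / t₁) (hκpos : 0 < κ)
    (hd0 : deriv u 0 = u₀')
    (hmax : deriv u t₁ = 0)
    (hlo : 1.5 * κ < u₀') (hhi : u₀' < 3 * κ) :
    ∀ t ∈ Set.Ioo 0 t₁, 0 < deriv u t ∧ deriv (deriv u) t < 0 := by
  have hderiv : deriv u = fun t => 3 * β₃ * t ^ 2 + 2 * β₂ * t + β₁ := by
    subst hu
    funext t
    have : HasDerivAt (fun t : ℝ => β₃ * t ^ 3 + β₂ * t ^ 2 + β₁ * t + β₀)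
        (3 * β₃ * t ^ 2 + 2 * β₂ * t + β₁) t := by
      have h := (((hasDerivAt_pow 3 t).const_mul β₃).add
        ((hasDerivAt_pow 2 t).const_mul β₂)).add
        (((hasDerivAt_id t).const_mul β₁).add_const β₀)
      convert h using 1
      · rfl
      · rfl
      · funext x; simp only [id_eq, Pi.add_apply]; ring
      · norm_num; ring
    exact this.deriv
  have hderiv2 : deriv (fun t => 3 * β₃ * t ^ 2 + 2 * β₂ * t + β₁) = fun t => 6 * β₃ * t + 2 * β₂ := by
    funext t
    have : HasDerivAt (fun t : ℝ => 3 * β₃ * t ^ 2 + 2 * β₂ * t + β₁)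
        (6 * β₃ * t + 2 * β₂) t := by
      have h := (((hasDerivAt_pow 2 t).const_mul (3 * β₃)).add
        (((hasDerivAt_id t).const_mul (2 * β₂)).add_const β₁))
      convert h using 1
      · rfl
      · rfl
      · funext x; simp only [id_eq, Pi.add_apply]; ring
      · norm_num; ring
    exact this.deriv
  have hκ' : κ * t₁ = u₁ - u₀ := by
    field_simp at hκ; linarith
  subst hu
  simp only at h0 h1
  rw [hderiv] at hd0 hmax
  simp only at hd0 hmax
  have hβ₁ : β₁ = u₀' := by linarith [hd0]
  have e1 : β₃ * t₁ ^ 3 + β₂ * t₁ ^ 2 + β₁ * t₁ = κ * t₁ := by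
    rw [hκ']; nlinarith [h0, h1]
  have e2 : 3 * β₃ * t₁ ^ 2 + 2 * β₂ * t₁ + β₁ = 0 := hmax
  have ht₁2 : (0:ℝ) < t₁ ^ 2 := by positivity
  have A3 : β₃ * t₁ ^ 2 = u₀' - 2 * κ := by
    have h : t₁ * (β₃ * t₁ ^ 2 - (u₀' - 2 * κ)) = 0 := by nlinarith [e1, e2]
    rcases mul_eq_zero.mp h with h' | h'
    · exact absurd h' (ne_of_gt ht₁)
    · linarith
  have A2 : β₂ * t₁ = 3 * κ - 2 * u₀' := by nlinarith [e2, A3]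
  intro t ht
  obtain ⟨ht0, htt⟩ := ht
  rw [hderiv, hderiv2]
  simp only
  have htt' : 0 < t₁ - t := by linarith
  have hu₀' : 0 < u₀' := by linarith
  have h6 : 0 < 6 * κ - 2 * u₀' := by linarith
  have h4 : 0 < 4 * u₀' - 6 * κ := by linarith
  constructor
  · have key : 0 < (3 * β₃ * t ^ 2 + 2 * β₂ * t + β₁) * t₁ ^ 2 := by
      have eq : (3 * β₃ * t ^ 2 + 2 * β₂ * t + β₁) * t₁ ^ 2
          = (t₁ - t) * ((t₁ - t) * u₀' + t * (6 * κ - 2 * u₀')) := by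
        linear_combination (3 * t ^ 2) * A3 + (2 * t * t₁) * A2 + t₁ ^ 2 * hβ₁
      rw [eq]
      have : 0 < (t₁ - t) * u₀' + t * (6 * κ - 2 * u₀') :=
        add_pos (mul_pos htt' hu₀') (mul_pos ht0 h6)
      exact mul_pos htt' this
    nlinarith [key, ht₁2]
  · have key : (6 * β₃ * t + 2 * β₂) * t₁ ^ 2 < 0 := by
      have eq : (6 * β₃ * t + 2 * β₂) * t₁ ^ 2
          = -((t₁ - t) * (4 * u₀' - 6 * κ) + t * (6 * κ - 2 * u₀')) := by
        linear_combination (6 * t) * A3 + (2 * t₁) * A2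
      rw [eq]
      have : 0 < (t₁ - t) * (4 * u₀' - 6 * κ) + t * (6 * κ - 2 * u₀') :=
        add_pos (mul_pos htt' h4) (mul_pos ht0 h6)
      linarith
    nlinarith [key, ht₁2]
end

section
/- Consider the cubic u(t) = β₃t³ + β₂t² + β₁t + β₀ on [0, t₁] with t₁ > 0, satisfying u(0) = u₀, u(t₁) = u₁ with κ := (u₁ − u₀)/t₁ > 0, u'(0) = u₀', and u''(t₁) = 0 (inflection at t₁). If κ < u₀' < 3κ, then u''(t) < 0 on (0, t₁) and u'(t₁) > 0. -/
/-- Case 2.3 of the `C⁰` trajectory predictor proof (motif `s₊₋ᵦ` ending in an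
inflection point): a cubic on `[0,t₁]` with `u(0) = u₀`, `u(t₁) = u₁`,
`κ = (u₁ − u₀)/t₁ > 0`, `u'(0) = u₀'`, `u''(t₁) = 0`, and `κ < u₀' < 3κ`
is strictly concave on `(0,t₁)` and has positive derivative at `t₁`. -/
theorem stmt_11 (β₀ β₁ β₂ β₃ t₁ u₀ u₁ u₀' κ : ℝ)
    (ht₁ : 0 < t₁)
    (u : ℝ → ℝ) (hu : u = fun t => β₃ * t ^ 3 + β₂ * t ^ 2 + β₁ * t + β₀)
    (h0 : u 0 = u₀) (h1 : u t₁ = u₁)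
    (hκ : κ = (u₁ - u₀) / t₁) (hκpos : 0 < κ)
    (hd0 : deriv u 0 = u₀')
    (hinfl : deriv (deriv u) t₁ = 0)
    (hlo : κ < u₀') (hhi : u₀' < 3 * κ) :
    (∀ t ∈ Set.Ioo 0 t₁, deriv (deriv u) t < 0) ∧ 0 < deriv u t₁ := by
  have hderiv : deriv u = fun t => 3 * β₃ * t ^ 2 + 2 * β₂ * t + β₁ := by
    subst hu
    funext t
    have h := ((((hasDerivAt_pow 3 t).const_mul β₃).add
      ((hasDerivAt_pow 2 t).const_mul β₂)).add
      ((hasDerivAt_id t).const_mul β₁)).add (hasDerivAt_const t β₀)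
    convert h.deriv using 1
    · rfl
    push_cast
    ring
  have hderiv2 : deriv (deriv u) = fun t => 6 * β₃ * t + 2 * β₂ := by
    rw [hderiv]
    funext t
    have h := (((hasDerivAt_pow 2 t).const_mul (3 * β₃)).add
      ((hasDerivAt_id t).const_mul (2 * β₂))).add (hasDerivAt_const t β₁)
    convert h.deriv using 1
    · rfl
    push_cast
    ring
  have hβ₁ : β₁ = u₀' := by rw [hderiv] at hd0; simpa using hd0
  have hβ₂ : β₂ = -3 * β₃ * t₁ := by
    rw [hderiv2] at hinfl; simp at hinfl; linarith
  have hκt : u₁ - u₀ = κ * t₁ := by rw [hκ]; field_simp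
  have hβ₃ : β₃ = (u₀' - κ) / (2 * t₁ ^ 2) := by
    subst hu
    simp at h0 h1
    have hh : β₃ * t₁ ^ 3 + β₂ * t₁ ^ 2 + β₁ * t₁ = κ * t₁ := by
      rw [← h0] at hκt; linarith
    rw [hβ₁, hβ₂] at hh
    field_simp
    nlinarith [sq_nonneg t₁]
  have hβ₃pos : 0 < β₃ := by
    rw [hβ₃]; apply div_pos (by linarith) (by positivity)
  constructor
  · intro t ht
    rw [hderiv2]
    simp only
    rw [hβ₂]
    nlinarith [ht.2]
  · rw [hderiv]
    simp only
    rw [hβ₁, hβ₂, hβ₃]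
    have h2 : (2 : ℝ) * t₁ ^ 2 ≠ 0 := by positivity
    field_simp
    nlinarith [mul_pos (show (0:ℝ) < 3 * κ - u₀' by linarith) (pow_pos ht₁ 2)]
end
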